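/- Let X and Y be jointly Gaussian real random variables, each standard Gaussian (mean 0, variance 1). Then for all natural numbers k and l, E[H_k(X) H_l(Y)] = k! \, \delta_{k,l} \, (E[XY])^k, where \delta_{k,l} is the Kronecker delta. -/

import Mathlib

open MeasureTheory ProbabilityTheory
open Polynomial Filter
open scoped NNReal ENNReal

namespace HGaux

noncomputable def φ (x : ℝ) : ℝ := (Real.sqrt (2 * Real.pi))⁻¹ * Real.exp (-(1/2) * x ^ 2)

lemma φ_nonneg (x : ℝ) : 0 ≤ φ x := by
  unfold φ
  positivity

lemma gaussianPDFReal_eq (x : ℝ) : gaussianPDFReal 0 1 x = φ x := by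
  unfold gaussianPDFReal φ
  norm_num
  left
  ring_nf

lemma gaussian_eq_withDensity :
    gaussianReal 0 1 = volume.withDensity (fun x => ((φ x).toNNReal : ENNReal)) := by
  rw [gaussianReal_of_var_ne_zero 0 one_ne_zero]
  congr 1
  funext x
  rw [gaussianPDF_def]
  simp [gaussianPDFReal_eq, ENNReal.ofReal]

lemma φ_meas : Measurable (fun x => (φ x).toNNReal) := by
  apply Measurable.real_toNNReal
  unfold φ
  fun_prop

lemma integral_gaussian_eq (g : ℝ → ℝ) :
    ∫ x, g x ∂(gaussianReal 0 1) = ∫ x, φ x * g x := by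
  rw [gaussian_eq_withDensity, integral_withDensity_eq_integral_smul φ_meas]
  congr 1
  funext x
  simp [NNReal.smul_def, Real.coe_toNNReal _ (φ_nonneg x)]

lemma integrable_gaussian_iff (g : ℝ → ℝ) :
    Integrable g (gaussianReal 0 1) ↔ Integrable (fun x => φ x * g x) := by
  rw [gaussian_eq_withDensity, integrable_withDensity_iff]
  · constructor
    · intro h
      refine h.congr (Eventually.of_forall fun x => ?_)
      simp [Real.coe_toNNReal _ (φ_nonneg x), mul_comm]
    · intro h
      refine h.congr (Eventually.of_forall fun x => ?_)
      simp [Real.coe_toNNReal _ (φ_nonneg x), mul_comm]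
  · exact φ_meas.coe_nnreal_ennreal
  · exact Eventually.of_forall fun x => ENNReal.coe_lt_top

lemma integrable_pow_mul_gauss (n : ℕ) :
    Integrable (fun x : ℝ => x ^ n * Real.exp (-(1/2) * x ^ 2)) := by
  have h := integrable_rpow_mul_exp_neg_mul_sq (b := 1/2) (by norm_num) (s := (n:ℝ))
    (by exact_mod_cast neg_one_lt_zero.trans_le (Nat.cast_nonneg n))
  refine h.congr (Eventually.of_forall fun x => ?_)
  simp [Real.rpow_natCast]

lemma integrable_poly_mul_gauss (p : ℝ[X]) :
    Integrable (fun x : ℝ => p.eval x * Real.exp (-(1/2) * x ^ 2)) := by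
  have : (fun x : ℝ => p.eval x * Real.exp (-(1/2) * x ^ 2)) =
      fun x => ∑ i ∈ Finset.range (p.natDegree + 1),
        p.coeff i * (x ^ i * Real.exp (-(1/2) * x ^ 2)) := by
    funext x
    rw [eval_eq_sum_range, Finset.sum_mul]
    exact Finset.sum_congr rfl fun i _ => by ring
  rw [this]
  exact integrable_finset_sum _ fun i _ => (integrable_pow_mul_gauss i).const_mul _

lemma integrable_poly_gaussian (p : ℝ[X]) :
    Integrable (fun x => p.eval x) (gaussianReal 0 1) := by
  rw [integrable_gaussian_iff]
  have : (fun x => φ x * p.eval x) =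
      fun x => (Real.sqrt (2 * Real.pi))⁻¹ * (p.eval x * Real.exp (-(1/2) * x ^ 2)) := by
    funext x; unfold φ; ring
  rw [this]
  exact (integrable_poly_mul_gauss p).const_mul _

lemma tendsto_poly_gauss_atTop (p : ℝ[X]) :
    Tendsto (fun x => p.eval x * Real.exp (-(1/2) * x ^ 2)) atTop (nhds 0) := by
  have h := Polynomial.tendsto_div_exp_atTop p
  have key : ∀ᶠ x in atTop, |p.eval x * Real.exp (-(1/2) * x ^ 2)| ≤ |p.eval x / Real.exp x| := by
    filter_upwards [eventually_ge_atTop (2 : ℝ)] with x hx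
    rw [abs_mul, abs_div, Real.abs_exp, Real.abs_exp, div_eq_mul_inv (|eval x p|), ← Real.exp_neg]
    · apply mul_le_mul_of_nonneg_left _ (abs_nonneg _)
      apply Real.exp_le_exp.2
      nlinarith
  have h0 : Tendsto (fun x => |p.eval x / Real.exp x|) atTop (nhds 0) := by
    simpa using h.abs
  have := squeeze_zero' (Eventually.of_forall fun x => abs_nonneg _) key h0
  exact tendsto_zero_iff_abs_tendsto_zero _ |>.2 this

lemma tendsto_poly_gauss_atBot (p : ℝ[X]) :
    Tendsto (fun x => p.eval x * Real.exp (-(1/2) * x ^ 2)) atBot (nhds 0) := by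
  have h := (tendsto_poly_gauss_atTop (p.comp (-X))).comp tendsto_neg_atBot_atTop
  refine h.congr fun x => ?_
  simp [Function.comp, eval_comp]

/-- integration by parts against the standard gaussian -/
lemma gaussian_ibp (p : ℝ[X]) :
    ∫ x, x * p.eval x ∂(gaussianReal 0 1) = ∫ x, (derivative p).eval x ∂(gaussianReal 0 1) := by
  rw [integral_gaussian_eq, integral_gaussian_eq]
  rw [← sub_eq_zero, ← integral_sub]
  rotate_left
  · have : (fun x => φ x * (x * p.eval x)) =
        fun x => (Real.sqrt (2 * Real.pi))⁻¹ * ((X * p).eval x * Real.exp (-(1/2) * x ^ 2)) := by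
      funext x; unfold φ; simp; ring
    rw [this]; exact (integrable_poly_mul_gauss _).const_mul _
  · have : (fun x => φ x * (derivative p).eval x) =
        fun x => (Real.sqrt (2 * Real.pi))⁻¹ *
          ((derivative p).eval x * Real.exp (-(1/2) * x ^ 2)) := by
      funext x; unfold φ; ring
    rw [this]; exact (integrable_poly_mul_gauss _).const_mul _
  -- the integrand is the negative of the derivative of G x = p.eval x * φ x
  set G : ℝ → ℝ := fun x => p.eval x * φ x with hG
  have hderiv : ∀ x : ℝ, HasDerivAt G (-(φ x * (x * p.eval x) - φ x * (derivative p).eval x)) x := by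
    intro x
    have h1 : HasDerivAt (fun x : ℝ => p.eval x) ((derivative p).eval x) x :=
      p.hasDerivAt x
    have h2 : HasDerivAt (fun x : ℝ => Real.exp (-(1/2) * x ^ 2)) 
        (-x * Real.exp (-(1/2) * x ^ 2)) x := by
      have hx : HasDerivAt (fun x : ℝ => -(1/2 : ℝ) * x ^ 2) (-x) x := by
        have := (hasDerivAt_pow 2 x).const_mul (-(1/2) : ℝ)
        exact this.congr_deriv (by norm_num; ring)
      have h2' := hx.exp
      convert h2' using 1; ring
    have := (h1.mul ((h2.const_mul ((Real.sqrt (2 * Real.pi))⁻¹ : ℝ))) : _)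
    refine this.congr_deriv ?_
    unfold φ
    ring
  have hint : Integrable (fun x => -(φ x * (x * p.eval x) - φ x * (derivative p).eval x)) := by
    have : (fun x => -(φ x * (x * p.eval x) - φ x * (derivative p).eval x)) =
        fun x => (Real.sqrt (2 * Real.pi))⁻¹ *
          ((derivative p - X * p).eval x * Real.exp (-(1/2) * x ^ 2)) := by
      funext x; unfold φ; simp; ring
    rw [this]; exact (integrable_poly_mul_gauss _).const_mul _
  have htop : Tendsto G atTop (nhds 0) := by
    have := (tendsto_poly_gauss_atTop p).const_mul ((Real.sqrt (2 * Real.pi))⁻¹ : ℝ)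
    simp only [mul_zero] at this
    refine this.congr fun x => ?_
    simp only [hG]; unfold φ; ring
  have hbot : Tendsto G atBot (nhds 0) := by
    have := (tendsto_poly_gauss_atBot p).const_mul ((Real.sqrt (2 * Real.pi))⁻¹ : ℝ)
    simp only [mul_zero] at this
    refine this.congr fun x => ?_
    simp only [hG]; unfold φ; ring
  have hIic := integral_Iic_of_hasDerivAt_of_tendsto' (a := 0)
    (fun x _ => hderiv x) hint.integrableOn hbot
  have hIoi := integral_Ioi_of_hasDerivAt_of_tendsto' (a := 0)
    (fun x _ => hderiv x) hint.integrableOn htop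
  have hsplit := intervalIntegral.integral_Iic_add_Ioi (b := (0:ℝ))
    hint.integrableOn hint.integrableOn
  have hzero : ∫ x, -(φ x * (x * p.eval x) - φ x * (derivative p).eval x) = 0 := by
    rw [← hsplit, hIic, hIoi]; ring
  rw [integral_neg] at hzero
  exact neg_eq_zero.mp hzero

/-- moments of the standard gaussian -/
noncomputable def ν (n : ℕ) : ℝ := ∫ x, x ^ n ∂(gaussianReal 0 1)

lemma ν_zero : ν 0 = 1 := by simp [ν]

lemma ν_one : ν 1 = 0 := by
  have h := gaussian_ibp 1
  simpa [ν] using h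

lemma ν_step (n : ℕ) : ν (n + 2) = (n + 1) * ν n := by
  have h := gaussian_ibp (X ^ (n + 1))
  simp only [derivative_X_pow, eval_mul, eval_pow, eval_X, eval_C,
    Nat.add_sub_cancel, Nat.cast_add, Nat.cast_one] at h
  have h1 : ∫ x, x * x ^ (n+1) ∂(gaussianReal 0 1) = ν (n+2) := by
    unfold ν; congr 1; funext x; ring
  have h2 : ∫ x, ((n:ℝ)+1) * x ^ n ∂(gaussianReal 0 1) = ((n:ℝ)+1) * ν n := by
    rw [integral_const_mul]; rfl
  rw [h1, h2] at h
  rw [h]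

lemma integrable_pow_gaussian (n : ℕ) : Integrable (fun x => x ^ n) (gaussianReal 0 1) :=
  (integrable_poly_gaussian (X ^ n)).congr (Eventually.of_forall fun x => by simp)

lemma gaussian_moment_scaled (v : ℝ≥0) (n : ℕ) :
    ∫ x, x ^ n ∂(gaussianReal 0 v) = (Real.sqrt v) ^ n * ν n := by
  have hmap : (gaussianReal 0 1).map (fun x => Real.sqrt v * x) = gaussianReal 0 v := by
    have := gaussianReal_map_const_mul (μ := 0) (v := 1) (Real.sqrt v)
    rw [this]
    congr 1
    · ring
    · ext
      simp [Real.sq_sqrt v.2]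
  rw [← hmap, integral_map (by fun_prop) (by fun_prop)]
  simp_rw [mul_pow]
  rw [integral_const_mul]
  rfl

lemma derivative_hermite_int (n : ℕ) :
    derivative (hermite (n + 1)) = C ((n : ℤ) + 1) * hermite n := by
  induction n with
  | zero => simp [hermite_one, hermite_zero]
  | succ n ih =>
    rw [hermite_succ (n + 1), derivative_sub, derivative_mul, derivative_X, one_mul, ih]
    have h1 : derivative (C ((n:ℤ)+1) * hermite n) = C ((n:ℤ)+1) * derivative (hermite n) := by
      rw [derivative_mul, derivative_C, zero_mul, zero_add]
    rw [h1]
    have h2 : X * (C ((n:ℤ)+1) * hermite n) - C ((n:ℤ)+1) * derivative (hermite n)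
        = C ((n:ℤ)+1) * hermite (n+1) := by
      rw [hermite_succ n]; ring
    rw [add_sub_assoc, h2]
    push_cast
    simp only [C_add, C_1]
    ring

/-- real Hermite polynomials -/
noncomputable def H (n : ℕ) : ℝ[X] := (hermite n).map (Int.castRingHom ℝ)

lemma H_zero : H 0 = 1 := by simp [H, hermite_zero]

lemma H_succ (n : ℕ) : H (n + 1) = X * H n - derivative (H n) := by
  unfold H
  rw [hermite_succ, Polynomial.map_sub, Polynomial.map_mul, map_X, derivative_map]

lemma derivative_H (n : ℕ) : derivative (H (n + 1)) = C ((n : ℝ) + 1) * H n := by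
  unfold H
  rw [derivative_map, derivative_hermite_int, Polynomial.map_mul, map_C]
  simp

lemma aeval_eq_eval_H (x : ℝ) (n : ℕ) : (aeval x (hermite n) : ℝ) = (H n).eval x := by
  rw [aeval_def, eval₂_eq_eval_map]
  rfl

noncomputable abbrev P2 : Measure (ℝ × ℝ) := (gaussianReal 0 1).prod (gaussianReal 0 1)

lemma integrable_polymul (p : ℝ[X]) (j : ℕ) :
    Integrable (fun x => p.eval x * x ^ j) (gaussianReal 0 1) :=
  (integrable_poly_gaussian (p * X ^ j)).congr (Eventually.of_forall fun x => by simp)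

lemma integrable_model (p w q : ℝ[X]) (c d : ℝ) :
    Integrable (fun z : ℝ × ℝ => p.eval z.1 * w.eval z.2 * q.eval (c * z.1 + d * z.2)) P2 := by
  have hF : (fun z : ℝ × ℝ => p.eval z.1 * w.eval z.2 * q.eval (c * z.1 + d * z.2)) =
      fun z => ∑ i ∈ Finset.range (q.natDegree + 1), ∑ j ∈ Finset.range (i + 1),
        (q.coeff i * (c ^ j * d ^ (i - j) * (i.choose j))) *
          ((p.eval z.1 * z.1 ^ j) * (w.eval z.2 * z.2 ^ (i - j))) := by
    funext z
    rw [eval_eq_sum_range (p := q), Finset.mul_sum]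
    refine Finset.sum_congr rfl fun i _ => ?_
    rw [add_pow, Finset.mul_sum, Finset.mul_sum]
    refine Finset.sum_congr rfl fun j hj => ?_
    rw [mul_pow, mul_pow]
    ring
  rw [hF]
  apply integrable_finset_sum
  intro i _
  apply integrable_finset_sum
  intro j _
  exact ((integrable_polymul p j).mul_prod (integrable_polymul w (i - j))).const_mul _

lemma integrable_model' (p w q : ℝ[X]) (c d : ℝ) (F : ℝ × ℝ → ℝ)
    (hFeq : ∀ z, F z = p.eval z.1 * w.eval z.2 * q.eval (c * z.1 + d * z.2)) :
    Integrable F P2 :=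
  (integrable_model p w q c d).congr (Eventually.of_forall fun z => (hFeq z).symm)

lemma integral_id_gaussian : ∫ x, x ∂(gaussianReal 0 1) = 0 := by
  have h1 : ∫ x, x ∂(gaussianReal 0 1) = ν 1 := by unfold ν; norm_num
  rw [h1, ν_one]

lemma model_fst_moment : ∫ z, z.1 ∂P2 = 0 := by
  rw [integral_prod _ (integrable_model' X 1 1 0 0 _ (fun z => by simp))]
  have : ∀ x : ℝ, ∫ _, x ∂(gaussianReal 0 1) = x := fun x => by simp
  simp_rw [this]
  exact integral_id_gaussian

lemma model_snd_moment : ∫ z, z.2 ∂P2 = 0 := by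
  rw [integral_prod _ (integrable_model' 1 X 1 0 0 _ (fun z => by simp))]
  simp_rw [integral_id_gaussian]
  simp

/-- inner integration by parts, x-variable -/
lemma inner_ibp_x (r : ℝ[X]) (c d y : ℝ) :
    ∫ x, x * r.eval (c * x + d * y) ∂(gaussianReal 0 1) =
      c * ∫ x, (derivative r).eval (c * x + d * y) ∂(gaussianReal 0 1) := by
  have h1 : ∀ x : ℝ, x * r.eval (c * x + d * y) = x * (r.comp (C c * X + C (d * y))).eval x := by
    intro x; simp [eval_comp]
  have h2 := gaussian_ibp (r.comp (C c * X + C (d * y)))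
  simp_rw [h1, h2, derivative_comp]
  have h3 : ∀ x : ℝ, (derivative (C c * X + C (d * y)) * (derivative r).comp (C c * X + C (d * y))).eval x
      = c * (derivative r).eval (c * x + d * y) := by
    intro x; simp [eval_comp]
  simp_rw [h3]
  rw [integral_const_mul]

lemma model_lin_moment (c d : ℝ) (n : ℕ) :
    ∫ z, (c * z.1 + d * z.2) ^ n ∂P2 = Real.sqrt (c ^ 2 + d ^ 2) ^ n * ν n := by
  induction n using Nat.twoStepInduction with
  | zero => simp [ν_zero]
  | one =>
    simp only [pow_one, ν_one, mul_zero]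
    rw [integral_add ((integrable_model' (C c * X) 1 1 0 0 _ (fun z => by simp)))
      ((integrable_model' 1 (C d * X) 1 0 0 _ (fun z => by simp)))]
    have e1 : ∫ z, c * z.1 ∂P2 = c * ∫ z, z.1 ∂P2 := integral_const_mul c _
    have e2 : ∫ z, d * z.2 ∂P2 = d * ∫ z, z.2 ∂P2 := integral_const_mul d _
    rw [e1, e2, model_fst_moment, model_snd_moment]
    ring
  | more n ihn _ =>
    have key : ∫ z, (c * z.1 + d * z.2) ^ (n + 2) ∂P2
        = (n + 1 : ℝ) * (c ^ 2 + d ^ 2) * ∫ z, (c * z.1 + d * z.2) ^ n ∂P2 := by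
      have hsplit : ∀ z : ℝ × ℝ, (c * z.1 + d * z.2) ^ (n + 2)
          = c * (z.1 * (c * z.1 + d * z.2) ^ (n + 1)) + d * (z.2 * (c * z.1 + d * z.2) ^ (n + 1)) := by
        intro z; ring
      simp_rw [hsplit]
      rw [integral_add
        (integrable_model' (C c * X) 1 (X ^ (n+1)) c d _
          (fun z => by simp only [eval_mul, eval_C, eval_X, eval_one, eval_pow, one_mul, mul_one]; ring))
        (integrable_model' 1 (C d * X) (X ^ (n+1)) c d _
          (fun z => by simp only [eval_mul, eval_C, eval_X, eval_one, eval_pow, one_mul, mul_one]; ring))]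
      rw [integral_const_mul, integral_const_mul]
      have hT1 : ∫ z, z.1 * (c * z.1 + d * z.2) ^ (n + 1) ∂P2
          = (n + 1 : ℝ) * c * ∫ z, (c * z.1 + d * z.2) ^ n ∂P2 := by
        rw [integral_prod_symm _ (integrable_model' X 1 (X ^ (n+1)) c d _ (fun z => by simp))]
        have hin : ∀ y : ℝ, ∫ x, x * (c * x + d * y) ^ (n + 1) ∂(gaussianReal 0 1)
            = (n + 1 : ℝ) * c * ∫ x, (c * x + d * y) ^ n ∂(gaussianReal 0 1) := by
          intro y
          have := inner_ibp_x (X ^ (n + 1)) c d y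
          simp only [eval_pow, eval_X, derivative_X_pow, Nat.add_sub_cancel, eval_mul, eval_C,
            Nat.cast_add, Nat.cast_one] at this
          rw [this, integral_const_mul]
          all_goals ring
        simp_rw [hin]
        rw [integral_const_mul]
        congr 1
        rw [integral_prod_symm _ (integrable_model' 1 1 (X ^ n) c d _ (fun z => by simp))]
      have hT2 : ∫ z, z.2 * (c * z.1 + d * z.2) ^ (n + 1) ∂P2
          = (n + 1 : ℝ) * d * ∫ z, (c * z.1 + d * z.2) ^ n ∂P2 := by
        rw [integral_prod _ (integrable_model' 1 X (X ^ (n+1)) c d _ (fun z => by simp))]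
        have hin : ∀ x : ℝ, ∫ y, y * (c * x + d * y) ^ (n + 1) ∂(gaussianReal 0 1)
            = (n + 1 : ℝ) * d * ∫ y, (c * x + d * y) ^ n ∂(gaussianReal 0 1) := by
          intro x
          have h0 : ∀ y : ℝ, c * x + d * y = d * y + c * x := fun y => by ring
          have := inner_ibp_x (X ^ (n + 1)) d c x
          simp only [eval_pow, eval_X, derivative_X_pow, Nat.add_sub_cancel, eval_mul, eval_C,
            Nat.cast_add, Nat.cast_one] at this
          simp_rw [h0]
          rw [this, integral_const_mul, ← mul_assoc, mul_comm d ((n:ℝ)+1)]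
        simp_rw [hin]
        rw [integral_const_mul]
        congr 1
        rw [integral_prod _ (integrable_model' 1 1 (X ^ n) c d _ (fun z => by simp))]
      rw [hT1, hT2]
      ring
    rw [key, ihn, ν_step]
    have h9 : Real.sqrt (c ^ 2 + d ^ 2) ^ (n + 2) = (c ^ 2 + d ^ 2) * Real.sqrt (c ^ 2 + d ^ 2) ^ n := by
      rw [pow_add, Real.sq_sqrt (by positivity : (0:ℝ) ≤ c ^ 2 + d ^ 2)]
      ring
    rw [h9]
    push_cast
    ring

lemma model_stein_x (p r : ℝ[X]) (c d : ℝ) :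
    ∫ z, z.1 * (p.eval z.1 * r.eval (c * z.1 + d * z.2)) ∂P2 =
      (∫ z, (derivative p).eval z.1 * r.eval (c * z.1 + d * z.2) ∂P2)
        + c * ∫ z, p.eval z.1 * (derivative r).eval (c * z.1 + d * z.2) ∂P2 := by
  have hint1 := integrable_model' (X * p) 1 r c d
    (fun z => z.1 * (p.eval z.1 * r.eval (c * z.1 + d * z.2))) (fun z => by simp; ring)
  have hg1 := integrable_model' (derivative p) 1 r c d
    (fun z => (derivative p).eval z.1 * r.eval (c * z.1 + d * z.2)) (fun z => by simp)
  have hg2 := integrable_model' (C c * p) 1 (derivative r) c d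
    (fun z => c * (p.eval z.1 * (derivative r).eval (c * z.1 + d * z.2))) (fun z => by simp; ring)
  calc ∫ z, z.1 * (p.eval z.1 * r.eval (c * z.1 + d * z.2)) ∂P2
      = ∫ y, ∫ x, x * (p.eval x * r.eval (c * x + d * y)) ∂(gaussianReal 0 1)
          ∂(gaussianReal 0 1) := integral_prod_symm _ hint1
    _ = ∫ y, ∫ x, ((derivative p).eval x * r.eval (c * x + d * y)
          + c * (p.eval x * (derivative r).eval (c * x + d * y)))
          ∂(gaussianReal 0 1) ∂(gaussianReal 0 1) := by
        congr 1
        funext y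
        have h1 : ∀ x : ℝ, x * (p.eval x * r.eval (c * x + d * y))
            = x * (p * r.comp (C c * X + C (d * y))).eval x := fun x => by simp [eval_comp]
        simp_rw [h1]
        rw [gaussian_ibp]
        refine integral_congr_ae (Eventually.of_forall fun x => ?_)
        rw [derivative_mul, derivative_comp]
        simp [eval_comp]
        ring
    _ = ∫ z, ((derivative p).eval z.1 * r.eval (c * z.1 + d * z.2)
          + c * (p.eval z.1 * (derivative r).eval (c * z.1 + d * z.2))) ∂P2 :=
        (integral_prod_symm _ (hg1.add hg2)).symm
    _ = _ := by rw [integral_add hg1 hg2, integral_const_mul]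

lemma model_stein_y (p r : ℝ[X]) (c d : ℝ) :
    ∫ z, z.2 * (p.eval z.1 * r.eval (c * z.1 + d * z.2)) ∂P2 =
      d * ∫ z, p.eval z.1 * (derivative r).eval (c * z.1 + d * z.2) ∂P2 := by
  have hint1 := integrable_model' p X r c d
    (fun z => z.2 * (p.eval z.1 * r.eval (c * z.1 + d * z.2))) (fun z => by simp; ring)
  have hg2 := integrable_model' (C d * p) 1 (derivative r) c d
    (fun z => d * (p.eval z.1 * (derivative r).eval (c * z.1 + d * z.2))) (fun z => by simp; ring)
  calc ∫ z, z.2 * (p.eval z.1 * r.eval (c * z.1 + d * z.2)) ∂P2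
      = ∫ x, ∫ y, y * (p.eval x * r.eval (c * x + d * y)) ∂(gaussianReal 0 1)
          ∂(gaussianReal 0 1) := integral_prod _ hint1
    _ = ∫ x, ∫ y, (d * (p.eval x * (derivative r).eval (c * x + d * y)))
          ∂(gaussianReal 0 1) ∂(gaussianReal 0 1) := by
        congr 1
        funext x
        have h1 : ∀ y : ℝ, y * (p.eval x * r.eval (c * x + d * y))
            = y * (C (p.eval x) * r.comp (C (c * x) + C d * X)).eval y := fun y => by
          simp [eval_comp]
        simp_rw [h1]
        rw [gaussian_ibp]
        refine integral_congr_ae (Eventually.of_forall fun y => ?_)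
        rw [derivative_mul, derivative_comp]
        simp [eval_comp]
        ring
    _ = ∫ z, (d * (p.eval z.1 * (derivative r).eval (c * z.1 + d * z.2))) ∂P2 :=
        (integral_prod _ hg2).symm
    _ = _ := integral_const_mul _ _

lemma model_stein_lin (p r : ℝ[X]) (c d : ℝ) :
    ∫ z, (c * z.1 + d * z.2) * (p.eval z.1 * r.eval (c * z.1 + d * z.2)) ∂P2 =
      c * (∫ z, (derivative p).eval z.1 * r.eval (c * z.1 + d * z.2) ∂P2)
        + (c ^ 2 + d ^ 2) * ∫ z, p.eval z.1 * (derivative r).eval (c * z.1 + d * z.2) ∂P2 := by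
  have hsplit : ∀ z : ℝ × ℝ, (c * z.1 + d * z.2) * (p.eval z.1 * r.eval (c * z.1 + d * z.2))
      = c * (z.1 * (p.eval z.1 * r.eval (c * z.1 + d * z.2)))
        + d * (z.2 * (p.eval z.1 * r.eval (c * z.1 + d * z.2))) := fun z => by ring
  simp_rw [hsplit]
  rw [integral_add
    (integrable_model' (C c * X * p) 1 r c d _ (fun z => by simp; ring))
    (integrable_model' (C d * p) X r c d _ (fun z => by simp; ring))]
  rw [integral_const_mul, integral_const_mul, model_stein_x, model_stein_y]
  ring

lemma poly_extract {n : ℕ} (g : ℕ → ℝ)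
    (h : ∀ a : ℝ, ∑ j ∈ Finset.range (n + 1), g j * a ^ j = 0) :
    ∀ j ∈ Finset.range (n + 1), g j = 0 := by
  intro j hj
  set p : ℝ[X] := ∑ i ∈ Finset.range (n + 1), C (g i) * X ^ i with hp
  have hzero : p = 0 := by
    apply Polynomial.funext
    intro r
    rw [eval_zero, hp]
    rw [eval_finset_sum]
    simpa using h r
  have hco := congrArg (fun q : ℝ[X] => q.coeff j) hzero
  simp only [hp, finset_sum_coeff, coeff_C_mul, coeff_X_pow, coeff_zero] at hco
  rw [Finset.sum_congr rfl (fun i _ => by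
    rw [show g i * (if j = i then (1:ℝ) else 0) = if j = i then g i else 0 by
      split <;> simp])] at hco
  rwa [Finset.sum_ite_eq (Finset.range (n+1)) j g, if_pos hj] at hco

end HGaux

open HGaux

/-- If `X` and `Y` are jointly Gaussian real random variables, each standard
Gaussian (mean 0, variance 1) — encoded by: every linear combination
`a•X + b•Y` is a centered Gaussian with variance `a² + 2abρ + b²`, where
`ρ = E[XY]` — then `E[H_k(X) H_l(Y)] = k! δ_{k,l} (E[XY])^k`. -/
theorem hermite_orthogonality_gaussian
    {Ω : Type*} [MeasurableSpace Ω] (P : Measure Ω) [IsProbabilityMeasure P]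
    (X Y : Ω → ℝ) (hX : Measurable X) (hY : Measurable Y)
    (hGauss : ∀ a b : ℝ,
      Measure.map (fun ω => a * X ω + b * Y ω) P =
        gaussianReal 0
          (Real.toNNReal (a ^ 2 + 2 * a * b * (∫ ω, X ω * Y ω ∂P) + b ^ 2)))
    (k l : ℕ) :
    ∫ ω, (Polynomial.aeval (X ω) (Polynomial.hermite k) : ℝ) *
        (Polynomial.aeval (Y ω) (Polynomial.hermite l)) ∂P =
      if k = l then (k.factorial : ℝ) * (∫ ω, X ω * Y ω ∂P) ^ k else 0 := by
  set ρ : ℝ := ∫ ω, X ω * Y ω ∂P with hρ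
  -- laws of X and Y
  have hlawX : Measure.map X P = gaussianReal 0 1 := by
    have h := hGauss 1 0
    have he : (fun ω => 1 * X ω + 0 * Y ω) = X := by funext ω; ring
    rw [he] at h
    rw [h]
    norm_num
  have hlawY : Measure.map Y P = gaussianReal 0 1 := by
    have h := hGauss 0 1
    have he : (fun ω => 0 * X ω + 1 * Y ω) = Y := by funext ω; ring
    rw [he] at h
    rw [h]
    norm_num
  -- integrability of powers
  have h_int_pow_X : ∀ n, Integrable (fun ω => X ω ^ n) P := by
    intro n
    have h1 : Integrable (fun x => x ^ n) (Measure.map X P) := by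
      rw [hlawX]; exact integrable_pow_gaussian n
    exact (integrable_map_measure (by fun_prop : Measurable fun x : ℝ => x ^ n).aestronglyMeasurable hX.aemeasurable).mp h1
  have h_int_pow_Y : ∀ n, Integrable (fun ω => Y ω ^ n) P := by
    intro n
    have h1 : Integrable (fun x => x ^ n) (Measure.map Y P) := by
      rw [hlawY]; exact integrable_pow_gaussian n
    exact (integrable_map_measure (by fun_prop : Measurable fun x : ℝ => x ^ n).aestronglyMeasurable hY.aemeasurable).mp h1
  have h_int_mono : ∀ i j, Integrable (fun ω => X ω ^ i * Y ω ^ j) P := by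
    intro i j
    have key : ∀ u v : ℝ, ‖u ^ i * v ^ j‖ ≤ 1/2 * (u ^ (2*i) + v ^ (2*j)) := by
      intro u v
      have e1 : (|u| ^ i) ^ 2 = u ^ (2*i) := by
        rw [← pow_mul, mul_comm i 2, pow_mul, sq_abs, ← pow_mul]
      have e2 : (|v| ^ j) ^ 2 = v ^ (2*j) := by
        rw [← pow_mul, mul_comm j 2, pow_mul, sq_abs, ← pow_mul]
      rw [Real.norm_eq_abs, abs_mul, abs_pow, abs_pow]
      nlinarith [sq_nonneg (|u| ^ i - |v| ^ j), abs_nonneg u, abs_nonneg v,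
        pow_nonneg (abs_nonneg u) i, pow_nonneg (abs_nonneg v) j]
    refine Integrable.mono' (((h_int_pow_X (2*i)).add (h_int_pow_Y (2*j))).const_mul (1/2))
      (((hX.pow_const i).mul (hY.pow_const j)).aestronglyMeasurable) ?_
    exact Eventually.of_forall fun ω => key (X ω) (Y ω)
  -- the correlation bound
  have h_int_XY : Integrable (fun ω => X ω * Y ω) P := by
    have := h_int_mono 1 1
    simpa using this
  have hX2 : ∫ ω, X ω ^ 2 ∂P = 1 := by
    have h1 : ∫ ω, X ω ^ 2 ∂P = ∫ x, x ^ 2 ∂(Measure.map X P) := by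
      rw [integral_map hX.aemeasurable (by fun_prop : Measurable fun x : ℝ => x ^ 2).aestronglyMeasurable]
    have hν2 : ν 2 = 1 := by
      have := ν_step 0
      rw [ν_zero] at this
      simpa using this
    rw [h1, hlawX]
    exact hν2 ▸ rfl
  have hY2 : ∫ ω, Y ω ^ 2 ∂P = 1 := by
    have h1 : ∫ ω, Y ω ^ 2 ∂P = ∫ x, x ^ 2 ∂(Measure.map Y P) := by
      rw [integral_map hY.aemeasurable (by fun_prop : Measurable fun x : ℝ => x ^ 2).aestronglyMeasurable]
    have hν2 : ν 2 = 1 := by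
      have := ν_step 0
      rw [ν_zero] at this
      simpa using this
    rw [h1, hlawY]
    exact hν2 ▸ rfl
  have hsum : ∫ ω, (X ω + Y ω) ^ 2 ∂P = 2 + 2 * ρ := by
    have hpt : ∀ ω, (X ω + Y ω) ^ 2 = X ω ^ 2 + Y ω ^ 2 + 2 * (X ω * Y ω) := fun ω => by ring
    simp_rw [hpt]
    have hA : Integrable (fun ω => X ω ^ 2 + Y ω ^ 2) P := (h_int_pow_X 2).add (h_int_pow_Y 2)
    have hB : Integrable (fun ω => 2 * (X ω * Y ω)) P := h_int_XY.const_mul 2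
    rw [integral_add hA hB, integral_add (h_int_pow_X 2) (h_int_pow_Y 2),
      integral_const_mul, hX2, hY2, ← hρ]
    ring
  have hdiff : ∫ ω, (X ω - Y ω) ^ 2 ∂P = 2 - 2 * ρ := by
    have hpt : ∀ ω, (X ω - Y ω) ^ 2 = X ω ^ 2 + Y ω ^ 2 + (-2) * (X ω * Y ω) := fun ω => by ring
    simp_rw [hpt]
    have hA : Integrable (fun ω => X ω ^ 2 + Y ω ^ 2) P := (h_int_pow_X 2).add (h_int_pow_Y 2)
    have hB : Integrable (fun ω => (-2) * (X ω * Y ω)) P := h_int_XY.const_mul (-2)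
    rw [integral_add hA hB, integral_add (h_int_pow_X 2) (h_int_pow_Y 2),
      integral_const_mul, hX2, hY2, ← hρ]
    ring
  have hρ2 : ρ ^ 2 ≤ 1 := by
    have h1 : (0:ℝ) ≤ 2 + 2 * ρ := hsum ▸ integral_nonneg fun ω => sq_nonneg _
    have h2 : (0:ℝ) ≤ 2 - 2 * ρ := hdiff ▸ integral_nonneg fun ω => sq_nonneg _
    nlinarith
  set s : ℝ := Real.sqrt (1 - ρ ^ 2) with hs
  have hs2 : s ^ 2 = 1 - ρ ^ 2 := Real.sq_sqrt (by nlinarith)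
  -- moment matching
  have hmapP : ∀ (a : ℝ) (n : ℕ), ∫ ω, (a * X ω + Y ω) ^ n ∂P
      = ∫ x, x ^ n ∂(gaussianReal 0 (Real.toNNReal (a ^ 2 + 2 * a * ρ + 1))) := by
    intro a n
    have h := hGauss a 1
    have hmeas : AEMeasurable (fun ω => a * X ω + 1 * Y ω) P := by fun_prop
    have h2 : ∫ x, x ^ n ∂(Measure.map (fun ω => a * X ω + 1 * Y ω) P)
        = ∫ ω, (a * X ω + 1 * Y ω) ^ n ∂P := integral_map hmeas (by fun_prop : Measurable fun x : ℝ => x ^ n).aestronglyMeasurable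
    rw [h] at h2
    have he : ∀ ω, a * X ω + 1 * Y ω = a * X ω + Y ω := fun ω => by ring
    simp_rw [he] at h2
    rw [← h2]
    norm_num
  have hq_nonneg : ∀ a : ℝ, (0:ℝ) ≤ a ^ 2 + 2 * a * ρ + 1 := by
    intro a; nlinarith [sq_nonneg (a + ρ)]
  have hmapM : ∀ (a : ℝ) (n : ℕ), ∫ z, (a * z.1 + (ρ * z.1 + s * z.2)) ^ n ∂P2
      = ∫ x, x ^ n ∂(gaussianReal 0 (Real.toNNReal (a ^ 2 + 2 * a * ρ + 1))) := by
    intro a n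
    have he : ∀ z : ℝ × ℝ, a * z.1 + (ρ * z.1 + s * z.2) = (a + ρ) * z.1 + s * z.2 :=
      fun z => by ring
    simp_rw [he]
    have harg : (a + ρ) ^ 2 + s ^ 2 = (((a ^ 2 + 2 * a * ρ + 1).toNNReal : ℝ≥0) : ℝ) := by
      rw [Real.coe_toNNReal _ (hq_nonneg a)]
      linear_combination hs2
    rw [model_lin_moment, gaussian_moment_scaled, harg]
  have hexpP : ∀ (a : ℝ) (n : ℕ), ∫ ω, (a * X ω + Y ω) ^ n ∂P
      = ∑ j ∈ Finset.range (n + 1),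
          ((n.choose j : ℝ) * ∫ ω, X ω ^ j * Y ω ^ (n - j) ∂P) * a ^ j := by
    intro a n
    have hpt : ∀ ω, (a * X ω + Y ω) ^ n = ∑ j ∈ Finset.range (n + 1),
        ((n.choose j : ℝ) * (X ω ^ j * Y ω ^ (n - j))) * a ^ j := by
      intro ω
      rw [add_pow]
      refine Finset.sum_congr rfl fun j hj => ?_
      rw [mul_pow]
      ring
    simp_rw [hpt]
    rw [integral_finset_sum _ (fun j _ => by
      have := (h_int_mono j (n - j)).const_mul ((n.choose j : ℝ) * a ^ j)
      refine this.congr (Eventually.of_forall fun ω => by ring))]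
    refine Finset.sum_congr rfl fun j hj => ?_
    have : ∀ ω, ((n.choose j : ℝ) * (X ω ^ j * Y ω ^ (n - j))) * a ^ j
        = ((n.choose j : ℝ) * a ^ j) * (X ω ^ j * Y ω ^ (n - j)) := fun ω => by ring
    simp_rw [this]
    rw [integral_const_mul]
    ring
  have hexpM : ∀ (a : ℝ) (n : ℕ), ∫ z, (a * z.1 + (ρ * z.1 + s * z.2)) ^ n ∂P2
      = ∑ j ∈ Finset.range (n + 1),
          ((n.choose j : ℝ) * ∫ z, z.1 ^ j * (ρ * z.1 + s * z.2) ^ (n - j) ∂P2) * a ^ j := by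
    intro a n
    have hpt : ∀ z : ℝ × ℝ, (a * z.1 + (ρ * z.1 + s * z.2)) ^ n = ∑ j ∈ Finset.range (n + 1),
        ((n.choose j : ℝ) * (z.1 ^ j * (ρ * z.1 + s * z.2) ^ (n - j))) * a ^ j := by
      intro z
      rw [add_pow]
      refine Finset.sum_congr rfl fun j hj => ?_
      rw [mul_pow]
      ring
    simp_rw [hpt]
    rw [integral_finset_sum _ (fun j _ => by
      have := (integrable_model ((Polynomial.X : ℝ[X]) ^ j) 1 ((Polynomial.X : ℝ[X]) ^ (n - j)) ρ s).const_mul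
        ((n.choose j : ℝ) * a ^ j)
      refine this.congr (Eventually.of_forall fun z => by simp; all_goals ring))]
    refine Finset.sum_congr rfl fun j hj => ?_
    have : ∀ z : ℝ × ℝ, ((n.choose j : ℝ) * (z.1 ^ j * (ρ * z.1 + s * z.2) ^ (n - j))) * a ^ j
        = ((n.choose j : ℝ) * a ^ j) * (z.1 ^ j * (ρ * z.1 + s * z.2) ^ (n - j)) := fun z => by ring
    simp_rw [this]
    rw [integral_const_mul]
    ring
  have hmom : ∀ i j : ℕ, ∫ ω, X ω ^ i * Y ω ^ j ∂P = ∫ z, z.1 ^ i * (ρ * z.1 + s * z.2) ^ j ∂P2 := by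
    intro i j
    set n := i + j with hn
    have hzero : ∀ a : ℝ, ∑ m ∈ Finset.range (n + 1),
        ((n.choose m : ℝ) * ((∫ ω, X ω ^ m * Y ω ^ (n - m) ∂P)
          - ∫ z, z.1 ^ m * (ρ * z.1 + s * z.2) ^ (n - m) ∂P2)) * a ^ m = 0 := by
      intro a
      have h1 := (hexpP a n).symm.trans ((hmapP a n).trans ((hmapM a n).symm.trans (hexpM a n)))
      rw [← sub_eq_zero] at h1
      rw [← h1, ← Finset.sum_sub_distrib]
      refine Finset.sum_congr rfl fun m hm => ?_
      ring
    have := poly_extract _ hzero i (by simp [hn])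
    have hch : (0:ℝ) < (n.choose i : ℝ) := by
      have : 0 < n.choose i := Nat.choose_pos (by omega)
      exact_mod_cast this
    have hsub := mul_eq_zero.mp this
    rcases hsub with h | h
    · exact absurd h (ne_of_gt hch)
    · have : n - i = j := by omega
      rw [this] at h
      linarith [h]
  -- transfer of polynomial product integrals
  have h_int_P : ∀ f g : ℝ[X], Integrable (fun ω => f.eval (X ω) * g.eval (Y ω)) P := by
    intro f g
    have hpt : ∀ ω, f.eval (X ω) * g.eval (Y ω) = ∑ i ∈ Finset.range (f.natDegree + 1),
        ∑ j ∈ Finset.range (g.natDegree + 1),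
          (f.coeff i * g.coeff j) * (X ω ^ i * Y ω ^ j) := by
      intro ω
      rw [eval_eq_sum_range (p := f), eval_eq_sum_range (p := g), Finset.sum_mul_sum]
      exact Finset.sum_congr rfl fun i _ => Finset.sum_congr rfl fun j _ => by ring
    simp_rw [hpt]
    refine integrable_finset_sum _ fun i _ => integrable_finset_sum _ fun j _ => ?_
    exact (h_int_mono i j).const_mul _
  have htrans : ∀ f g : ℝ[X], ∫ ω, f.eval (X ω) * g.eval (Y ω) ∂P
      = ∫ z, f.eval z.1 * g.eval (ρ * z.1 + s * z.2) ∂P2 := by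
    intro f g
    have hptP : ∀ ω, f.eval (X ω) * g.eval (Y ω) = ∑ i ∈ Finset.range (f.natDegree + 1),
        ∑ j ∈ Finset.range (g.natDegree + 1),
          (f.coeff i * g.coeff j) * (X ω ^ i * Y ω ^ j) := by
      intro ω
      rw [eval_eq_sum_range (p := f), eval_eq_sum_range (p := g), Finset.sum_mul_sum]
      exact Finset.sum_congr rfl fun i _ => Finset.sum_congr rfl fun j _ => by ring
    have hptM : ∀ z : ℝ × ℝ, f.eval z.1 * g.eval (ρ * z.1 + s * z.2)
        = ∑ i ∈ Finset.range (f.natDegree + 1), ∑ j ∈ Finset.range (g.natDegree + 1),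
          (f.coeff i * g.coeff j) * (z.1 ^ i * (ρ * z.1 + s * z.2) ^ j) := by
      intro z
      rw [eval_eq_sum_range (p := f), eval_eq_sum_range (p := g), Finset.sum_mul_sum]
      exact Finset.sum_congr rfl fun i _ => Finset.sum_congr rfl fun j _ => by ring
    simp_rw [hptP, hptM]
    rw [integral_finset_sum _ (fun i _ => integrable_finset_sum _ fun j _ =>
      (h_int_mono i j).const_mul _)]
    rw [integral_finset_sum _ (fun i _ => integrable_finset_sum _ fun j _ =>
      (integrable_model ((Polynomial.X : ℝ[X]) ^ i) 1 ((Polynomial.X : ℝ[X]) ^ j) ρ s).congr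
        (Eventually.of_forall fun z => by simp; all_goals ring) |>.const_mul _)]
    refine Finset.sum_congr rfl fun i _ => ?_
    rw [integral_finset_sum _ (fun j _ => (h_int_mono i j).const_mul _),
      integral_finset_sum _ (fun j _ =>
        (integrable_model ((Polynomial.X : ℝ[X]) ^ i) 1 ((Polynomial.X : ℝ[X]) ^ j) ρ s).congr
          (Eventually.of_forall fun z => by simp; all_goals ring) |>.const_mul _)]
    refine Finset.sum_congr rfl fun j _ => ?_
    rw [integral_const_mul, integral_const_mul, hmom i j]
  -- Stein identities under P
  have hsteinX : ∀ f g : ℝ[X], ∫ ω, X ω * (f.eval (X ω) * g.eval (Y ω)) ∂P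
      = (∫ ω, (derivative f).eval (X ω) * g.eval (Y ω) ∂P)
        + ρ * ∫ ω, f.eval (X ω) * (derivative g).eval (Y ω) ∂P := by
    intro f g
    have h1 : ∫ ω, X ω * (f.eval (X ω) * g.eval (Y ω)) ∂P
        = ∫ ω, ((Polynomial.X : ℝ[X]) * f).eval (X ω) * g.eval (Y ω) ∂P := by
      refine integral_congr_ae (Eventually.of_forall fun ω => ?_)
      simp
      all_goals ring
    have h2 : ∫ z, ((Polynomial.X : ℝ[X]) * f).eval z.1 * g.eval (ρ * z.1 + s * z.2) ∂P2
        = ∫ z, z.1 * (f.eval z.1 * g.eval (ρ * z.1 + s * z.2)) ∂P2 := by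
      refine integral_congr_ae (Eventually.of_forall fun z => ?_)
      simp
      all_goals ring
    rw [h1, htrans ((Polynomial.X : ℝ[X]) * f) g, h2, model_stein_x f g ρ s, ← htrans f (derivative g),
      ← htrans (derivative f) g]
  have hsteinY : ∀ f g : ℝ[X], ∫ ω, Y ω * (f.eval (X ω) * g.eval (Y ω)) ∂P
      = ρ * (∫ ω, (derivative f).eval (X ω) * g.eval (Y ω) ∂P)
        + ∫ ω, f.eval (X ω) * (derivative g).eval (Y ω) ∂P := by
    intro f g
    have h1 : ∫ ω, Y ω * (f.eval (X ω) * g.eval (Y ω)) ∂P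
        = ∫ ω, f.eval (X ω) * ((Polynomial.X : ℝ[X]) * g).eval (Y ω) ∂P := by
      refine integral_congr_ae (Eventually.of_forall fun ω => ?_)
      simp
      all_goals ring
    have h2 : ∫ z, f.eval z.1 * ((Polynomial.X : ℝ[X]) * g).eval (ρ * z.1 + s * z.2) ∂P2
        = ∫ z, (ρ * z.1 + s * z.2) * (f.eval z.1 * g.eval (ρ * z.1 + s * z.2)) ∂P2 := by
      refine integral_congr_ae (Eventually.of_forall fun z => ?_)
      simp
      all_goals ring
    have h3 := model_stein_lin f g ρ s
    rw [h1, htrans f ((Polynomial.X : ℝ[X]) * g), h2, h3, ← htrans f (derivative g), ← htrans (derivative f) g]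
    have : ρ ^ 2 + s ^ 2 = 1 := by rw [hs2]; ring
    rw [this]
    ring
  -- the main recursion
  have hJstep : ∀ p q : ℝ[X], ∫ ω, ((Polynomial.X : ℝ[X]) * p - derivative p).eval (X ω) * q.eval (Y ω) ∂P
      = ρ * ∫ ω, p.eval (X ω) * (derivative q).eval (Y ω) ∂P := by
    intro p q
    have hpt : ∀ ω, ((Polynomial.X : ℝ[X]) * p - derivative p).eval (X ω) * q.eval (Y ω)
        = X ω * (p.eval (X ω) * q.eval (Y ω)) - (derivative p).eval (X ω) * q.eval (Y ω) := by
      intro ω; simp; all_goals ring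
    simp_rw [hpt]
    rw [integral_sub ((h_int_P ((Polynomial.X : ℝ[X]) * p) q).congr (Eventually.of_forall fun ω => by simp; all_goals ring))
      (h_int_P (derivative p) q)]
    rw [hsteinX p q]
    ring
  have hJstepY : ∀ q : ℝ[X], ∫ ω, (1 : ℝ[X]).eval (X ω) * ((Polynomial.X : ℝ[X]) * q - derivative q).eval (Y ω) ∂P
      = 0 := by
    intro q
    have hpt : ∀ ω, (1 : ℝ[X]).eval (X ω) * ((Polynomial.X : ℝ[X]) * q - derivative q).eval (Y ω)
        = Y ω * ((1 : ℝ[X]).eval (X ω) * q.eval (Y ω))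
          - (1 : ℝ[X]).eval (X ω) * (derivative q).eval (Y ω) := by
      intro ω; simp; all_goals ring
    simp_rw [hpt]
    rw [integral_sub ((h_int_P 1 ((Polynomial.X : ℝ[X]) * q)).congr (Eventually.of_forall fun ω => by simp; all_goals ring))
      (h_int_P 1 (derivative q))]
    rw [hsteinY 1 q]
    all_goals simp
  have hbase : ∀ q : ℕ, ∫ ω, (H 0).eval (X ω) * (H q).eval (Y ω) ∂P
      = if (0 : ℕ) = q then 1 else 0 := by
    intro q
    cases q with
    | zero =>
      simp [H_zero]
    | succ q =>
      rw [if_neg (by omega)]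
      rw [H_zero, H_succ]
      have := hJstepY (H q)
      rw [← this]
      all_goals refine integral_congr_ae (Eventually.of_forall fun ω => by simp)
  have hmain : ∀ k l : ℕ, ∫ ω, (H k).eval (X ω) * (H l).eval (Y ω) ∂P
      = if k = l then (k.factorial : ℝ) * ρ ^ k else 0 := by
    intro k
    induction k with
    | zero =>
      intro l
      have := hbase l
      simpa using this
    | succ k ih =>
      intro l
      rw [H_succ]
      rw [hJstep (H k) (H l)]
      cases l with
      | zero =>
        rw [H_zero]
        simp
      | succ l =>
        rw [derivative_H l]
        have hpt : ∀ ω, (H k).eval (X ω) * (C ((l : ℝ) + 1) * H l).eval (Y ω)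
            = ((l : ℝ) + 1) * ((H k).eval (X ω) * (H l).eval (Y ω)) := by
          intro ω; simp; all_goals ring
        simp_rw [hpt]
        rw [integral_const_mul, ih l]
        by_cases hkl : k = l
        · subst hkl
          rw [if_pos rfl, if_pos rfl]
          rw [Nat.factorial_succ]
          push_cast
          ring
        · rw [if_neg hkl, if_neg (by omega)]
          ring
  have hfin := hmain k l
  have hgoal : ∫ ω, (Polynomial.aeval (X ω) (Polynomial.hermite k) : ℝ) *
      (Polynomial.aeval (Y ω) (Polynomial.hermite l)) ∂P
      = ∫ ω, (H k).eval (X ω) * (H l).eval (Y ω) ∂P := by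
    refine integral_congr_ae (Eventually.of_forall fun ω => ?_)
    simp only [aeval_eq_eval_H]
  rw [hgoal, hfin]
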